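/- The necklace ratio profile for fixed q equals the power-sum profile: for every q ≥ 2 and ℓ ≥ 2, the closure of { (hom(N_{8,q};G)/hom(N_{4,q};G)^2, ..., hom(N_{4ℓ,q};G)/hom(N_{4,q};G)^ℓ) : G a graph with hom(N_{4,q};G) ≠ 0 } equals Π_ℓ. -/

import Mathlib

open SimpleGraph

/-- The number of graph homomorphisms from `H` to `G`. -/
noncomputable def homCount {α β : Type*} (H : SimpleGraph α) (G : SimpleGraph β) : ℕ :=
  Nat.card (H →g G)

/-- The necklace `N_{c,q}`: the `q`-ification of the cycle of length `c`. -/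
def necklace (c q : ℕ) : SimpleGraph (ZMod c ⊕ ZMod c × Fin (q - 2)) where
  Adj x y :=
    match x, y with
    | .inl a, .inl b => a ≠ b ∧ (a - b = 1 ∨ b - a = 1)
    | .inl a, .inr (t, _) => a = t ∨ a = t + 1
    | .inr (t, _), .inl a => a = t ∨ a = t + 1
    | .inr (t, s), .inr (t', s') => t = t' ∧ s ≠ s'
  symm := ⟨by rintro (a | ⟨t, s⟩) (b | ⟨t', s'⟩) h <;> simp_all <;> tauto⟩
  loopless := ⟨by rintro (a | ⟨t, s⟩) h <;> simp_all⟩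

/-- The power-sum profile `Π_ℓ`. -/
def powerSumProfile (ℓ : ℕ) : Set (Fin (ℓ - 1) → ℝ) :=
  closure {v | ∃ (n : ℕ) (x : Fin n → ℝ), (∀ i, 0 ≤ x i) ∧ (∑ i, x i) = 1 ∧
    ∀ j : Fin (ℓ - 1), v j = ∑ i, x i ^ ((j : ℕ) + 2)}


section Aux

open Finset Matrix

namespace NeckAux

set_option linter.unusedSectionVars false

variable {V : Type} [Fintype V] [DecidableEq V] {R : Type} [CommSemiring R]

/-- The path `u, g 0, …, g (k-1), v` as a tuple. -/
def W {k : ℕ} (u v : V) (g : Fin k → V) : Fin (k + 2) → V :=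
  Fin.cons u (Fin.snoc g v : Fin (k + 1) → V)

/-- Product of `A`-entries along the path `u, g 0, …, g (k-1), v`. -/
def P (A : Matrix V V R) (k : ℕ) (u v : V) (g : Fin k → V) : R :=
  ∏ i : Fin (k + 1), A (W u v g i.castSucc) (W u v g i.succ)

lemma W_castSucc {m : ℕ} (u : V) (X : Fin m → V) (v : V) (j : Fin (m + 1)) :
    W u v X j.castSucc = (Fin.cons u X : Fin (m + 1) → V) j := by
  induction j using Fin.cases with
  | zero => simp [W]
  | succ j => rw [W, ← Fin.succ_castSucc, Fin.cons_succ, Fin.cons_succ, Fin.snoc_castSucc]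

lemma pow_succ_apply (A : Matrix V V R) :
    ∀ (k : ℕ) (u v : V), (A ^ (k + 1)) u v = ∑ g : Fin k → V, P A k u v g := by
  intro k
  induction k with
  | zero =>
    intro u v
    rw [pow_one, Fintype.sum_unique]
    simp only [P, Fin.prod_univ_succ, Finset.univ_eq_empty, Finset.prod_empty, mul_one]
    have h0 : W u v (default : Fin 0 → V) (Fin.castSucc 0) = u := rfl
    have h1 : W u v (default : Fin 0 → V) (Fin.succ 0) = v := by
      rw [W, Fin.cons_succ]
      exact Fin.snoc_last _ _
    rw [h0, h1]
  | succ k ih =>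
    intro u v
    rw [pow_succ, Matrix.mul_apply]
    simp only [ih]
    rw [← Equiv.sum_comp (Fin.snocEquiv (fun _ => V)) (P A (k + 1) u v), Fintype.sum_prod_type]
    apply Finset.sum_congr rfl
    intro w _
    rw [Finset.sum_mul]
    apply Finset.sum_congr rfl
    intro g _
    simp only [Fin.snocEquiv, Equiv.coe_fn_mk]
    have key : ∀ j : Fin (k + 2), W u v (Fin.snoc g w : Fin (k+1) → V) j.castSucc
        = W u w g j := by
      intro j
      rw [W_castSucc]
      induction j using Fin.cases with
      | zero => simp [W]
      | succ j => rw [Fin.cons_succ, W, Fin.cons_succ]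
    have e1 : W u v (Fin.snoc g w : Fin (k+1) → V) (Fin.last (k + 1)).castSucc = w := by
      rw [key]
      show (Fin.cons u (Fin.snoc g w : Fin (k+1) → V) : Fin (k+2) → V) (Fin.last (k+1)) = w
      rw [← Fin.succ_last, Fin.cons_succ, Fin.snoc_last]
    have e2 : W u v (Fin.snoc g w : Fin (k+1) → V) (Fin.last (k + 1)).succ = v := by
      rw [Fin.succ_last, W, ← Fin.succ_last, Fin.cons_succ, Fin.snoc_last]
    conv_rhs => rw [P, Fin.prod_univ_castSucc]
    rw [e1, e2]
    congr 1
    rw [P]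
    apply Finset.prod_congr rfl
    intro i _
    rw [Fin.succ_castSucc, key, key]

end NeckAux

namespace NeckAux2
open NeckAux

variable {V : Type} [Fintype V] [DecidableEq V] {R : Type} [CommSemiring R]

/-- The equivalence `Fin c ≃ ZMod c`. -/
def finZMod (c : ℕ) [NeZero c] : Fin c ≃ ZMod c where
  toFun i := (i.val : ZMod c)
  invFun x := ⟨x.val, ZMod.val_lt x⟩
  left_inv i := by
    ext
    simp [ZMod.val_cast_of_lt i.isLt]
  right_inv x := ZMod.natCast_rightInverse x

lemma trace_pow_cycle (A : Matrix V V R) (c : ℕ) [NeZero c] :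
    Matrix.trace (A ^ c) = ∑ h : ZMod c → V, ∏ t : ZMod c, A (h t) (h (t + 1)) := by
  obtain ⟨k, rfl⟩ := Nat.exists_eq_succ_of_ne_zero (NeZero.ne c)
  rw [Matrix.trace]
  simp only [Matrix.diag, pow_succ_apply A k]
  set e : Fin (k + 1) ≃ ZMod (k + 1) := finZMod (k + 1) with he
  set Φ : V × (Fin k → V) ≃ (ZMod (k + 1) → V) :=
    (Fin.consEquiv (fun _ => V)).trans (Equiv.arrowCongr e (Equiv.refl V)) with hΦ
  rw [← Equiv.sum_comp Φ (fun h => ∏ t : ZMod (k+1), A (h t) (h (t + 1))),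
    Fintype.sum_prod_type]
  apply Finset.sum_congr rfl
  intro u _
  apply Finset.sum_congr rfl
  intro g _
  have hΦval : ∀ t : ZMod (k + 1), Φ (u, g) t = (Fin.cons u g : Fin (k+1) → V) (e.symm t) := by
    intro t; rfl
  have hsymm : ∀ i : Fin (k + 1), e.symm (e i) = i := e.left_inv
  have claimA : ∀ i : Fin k, e i.castSucc + 1 = e i.succ := by
    intro i
    show ((i.castSucc.val : ℕ) : ZMod (k+1)) + 1 = ((i.succ.val : ℕ) : ZMod (k+1))
    rw [Fin.coe_castSucc, Fin.val_succ]
    push_cast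
    ring
  have claimB : e (Fin.last k) + 1 = e 0 := by
    show ((Fin.last k).val : ZMod (k+1)) + 1 = (((0 : Fin (k+1)).val : ℕ) : ZMod (k+1))
    rw [Fin.val_last, Fin.val_zero]
    rw [show ((k : ℕ) : ZMod (k+1)) + 1 = ((k + 1 : ℕ) : ZMod (k+1)) by push_cast; ring]
    rw [ZMod.natCast_self, Nat.cast_zero]
  symm
  calc (∏ t : ZMod (k+1), A (Φ (u, g) t) (Φ (u, g) (t + 1)))
      = ∏ i : Fin (k+1), A (Φ (u, g) (e i)) (Φ (u, g) (e i + 1)) :=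
        (Equiv.prod_comp e _).symm
    _ = P A k u u g := by
        simp only [hΦval, hsymm]
        rw [P, Fin.prod_univ_castSucc, Fin.prod_univ_castSucc]
        congr 1
        · apply Finset.prod_congr rfl
          intro i _
          rw [claimA, hsymm, W_castSucc, Fin.succ_castSucc, W_castSucc]
        · rw [claimB, hsymm, W_castSucc]
          congr 1
          rw [Fin.succ_last, W, ← Fin.succ_last, Fin.cons_succ, Fin.snoc_last]
          rfl

end NeckAux2



namespace NeckAux3

variable {V : Type} [Fintype V] [DecidableEq V]

/-- The condition that `g` lists the extra vertices of a `q`-clique through the edge `uv`. -/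
def ExtOK (G : SimpleGraph V) (q : ℕ) (u v : V) (g : Fin (q - 2) → V) : Prop :=
  G.Adj u v ∧ (∀ s, G.Adj u (g s)) ∧ (∀ s, G.Adj v (g s)) ∧
    ∀ s s', s ≠ s' → G.Adj (g s) (g s')

/-- The `q`-clique counting matrix of `G` (ℕ-valued). -/
noncomputable def Mnat (G : SimpleGraph V) (q : ℕ) : Matrix V V ℕ :=
  fun u v => Nat.card {g : Fin (q - 2) → V // ExtOK G q u v g}

lemma nat_card_sigma {ι : Type} [Fintype ι] {T : ι → Type} [∀ i, Finite (T i)] :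
    Nat.card (Σ i, T i) = ∑ i, Nat.card (T i) := by
  letI : ∀ i, Fintype (T i) := fun i => Fintype.ofFinite _
  simp [Nat.card_eq_fintype_card]

/-- Homs from the necklace correspond to closed walks decorated with clique extensions. -/
def homEquiv (c q : ℕ) (hc : 2 ≤ c) (G : SimpleGraph V) :
    (necklace c q →g G) ≃
      {fg : (ZMod c → V) × (ZMod c → Fin (q - 2) → V) //
        ∀ t, ExtOK G q (fg.1 t) (fg.1 (t + 1)) (fg.2 t)} where
  toFun h := by
    haveI : Fact (1 < c) := ⟨by omega⟩
    refine ⟨(fun t => h (Sum.inl t), fun t s => h (Sum.inr (t, s))), fun t => ⟨?_, ?_, ?_, ?_⟩⟩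
    · exact h.map_adj (show (necklace c q).Adj (Sum.inl t) (Sum.inl (t + 1)) from
        ⟨fun ht => by simpa using congrArg (· - t) ht, Or.inr (by ring)⟩)
    · exact fun s => h.map_adj (show (necklace c q).Adj (Sum.inl t) (Sum.inr (t, s)) from
        Or.inl rfl)
    · exact fun s => h.map_adj (show (necklace c q).Adj (Sum.inl (t+1)) (Sum.inr (t, s)) from
        Or.inr rfl)
    · exact fun s s' hss => h.map_adj
        (show (necklace c q).Adj (Sum.inr (t, s)) (Sum.inr (t, s')) from ⟨rfl, hss⟩)
  invFun x :=
    { toFun := Sum.elim x.1.1 (fun p => x.1.2 p.1 p.2)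
      map_rel' := by
        obtain ⟨⟨f, g⟩, hfg⟩ := x
        rintro (a | ⟨t, s⟩) (b | ⟨t', s'⟩) hab
        · obtain ⟨hne, h1 | h1⟩ := hab
          · have ha : a = 1 + b := sub_eq_iff_eq_add.mp h1
            rw [ha, add_comm]
            exact ((hfg b).1).symm
          · have hb : b = 1 + a := sub_eq_iff_eq_add.mp h1
            rw [hb, add_comm]
            exact (hfg a).1
        · obtain h1 | h1 := hab
          · rw [h1]; exact (hfg t').2.1 s'
          · rw [h1]; exact (hfg t').2.2.1 s'
        · obtain h1 | h1 := hab
          · rw [h1]; exact ((hfg t).2.1 s).symm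
          · rw [h1]; exact ((hfg t).2.2.1 s).symm
        · obtain ⟨rfl, hss⟩ := hab
          exact (hfg t).2.2.2 s s' hss }
  left_inv h := by
    ext x
    rcases x with a | ⟨t, s⟩ <;> rfl
  right_inv x := rfl

/-- Second reshuffle: to a sigma of pi types. -/
def homEquiv2 (c q : ℕ) (G : SimpleGraph V) :
    {fg : (ZMod c → V) × (ZMod c → Fin (q - 2) → V) //
        ∀ t, ExtOK G q (fg.1 t) (fg.1 (t + 1)) (fg.2 t)} ≃
      Σ f : ZMod c → V, ∀ t : ZMod c, {g : Fin (q - 2) → V // ExtOK G q (f t) (f (t + 1)) g} where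
  toFun x := ⟨x.1.1, fun t => ⟨x.1.2 t, x.2 t⟩⟩
  invFun y := ⟨(y.1, fun t => (y.2 t).1), fun t => (y.2 t).2⟩
  left_inv x := rfl
  right_inv y := rfl

theorem homCount_eq_trace (q c : ℕ) (hq : 2 ≤ q) (hc : 2 ≤ c) (G : SimpleGraph V) :
    haveI : NeZero c := ⟨by omega⟩
    homCount (necklace c q) G = Matrix.trace ((Mnat G q) ^ c) := by
  classical
  haveI : NeZero c := ⟨by omega⟩
  rw [homCount, Nat.card_congr ((homEquiv c q hc G).trans (homEquiv2 c q G)),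
    nat_card_sigma]
  rw [NeckAux2.trace_pow_cycle (Mnat G q) c]
  apply Finset.sum_congr rfl
  intro f _
  rw [Nat.card_pi]
  rfl

end NeckAux3

namespace NeckSpec

open Matrix

lemma trace_pow_eq_sum_eigs {n : Type} [Fintype n] [DecidableEq n] {A : Matrix n n ℝ}
    (hA : A.IsHermitian) (k : ℕ) :
    (A ^ k).trace = ∑ i, hA.eigenvalues i ^ k := by
  set U : Matrix n n ℝ := (hA.eigenvectorUnitary : Matrix n n ℝ) with hU
  set D : Matrix n n ℝ := diagonal (RCLike.ofReal ∘ hA.eigenvalues) with hD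
  have hUU : star U * U = 1 := by
    rw [hU]
    exact Matrix.mem_unitaryGroup_iff'.mp hA.eigenvectorUnitary.2
  have hspec : A = U * D * star U := hA.spectral_theorem
  have hpow : A ^ k = U * D ^ k * star U := by
    induction k with
    | zero =>
      rw [pow_zero, pow_zero, mul_one]
      exact (Matrix.mem_unitaryGroup_iff.mp hA.eigenvectorUnitary.2).symm
    | succ k ih =>
      rw [pow_succ, ih, hspec]
      simp only [Matrix.mul_assoc]
      rw [← Matrix.mul_assoc (star U) U, hUU, one_mul, pow_succ]
      simp only [Matrix.mul_assoc]
  rw [hpow, Matrix.trace_mul_cycle, hUU, one_mul, diagonal_pow, trace_diagonal]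
  simp

variable {V : Type} [Fintype V] [DecidableEq V]

/-- The real clique-counting matrix. -/
noncomputable def Mre (G : SimpleGraph V) (q : ℕ) : Matrix V V ℝ :=
  (NeckAux3.Mnat G q).map (Nat.cast)

lemma mre_isHermitian (G : SimpleGraph V) (q : ℕ) : (Mre G q).IsHermitian := by
  have hsym : ∀ u v, NeckAux3.Mnat G q u v = NeckAux3.Mnat G q v u := by
    intro u v
    refine Nat.card_congr (Equiv.subtypeEquivRight fun g => ?_)
    unfold NeckAux3.ExtOK
    constructor <;> rintro ⟨h1, h2, h3, h4⟩ <;> exact ⟨h1.symm, h3, h2, h4⟩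
  ext i j
  simp only [Mre, Matrix.conjTranspose_apply, Matrix.map_apply, star_trivial]
  rw [hsym]

/-- The eigenvalues of the clique-counting matrix. -/
noncomputable def eig (G : SimpleGraph V) (q : ℕ) : V → ℝ :=
  (mre_isHermitian G q).eigenvalues

theorem homCount_eq_trace_re (q c : ℕ) (hq : 2 ≤ q) (hc : 2 ≤ c) (G : SimpleGraph V) :
    (homCount (necklace c q) G : ℝ) = ((Mre G q) ^ c).trace := by
  haveI : NeZero c := ⟨by omega⟩
  rw [NeckAux3.homCount_eq_trace q c hq hc G]
  have h1 : (Mre G q) ^ c = ((NeckAux3.Mnat G q) ^ c).map Nat.cast := by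
    rw [show Mre G q = (Nat.castRingHom ℝ).mapMatrix (NeckAux3.Mnat G q) from rfl, ← map_pow]
    rfl
  rw [h1]
  simp only [Matrix.trace, Matrix.diag, Matrix.map_apply]
  push_cast
  rfl

theorem homCount_eq_sum_eig (q c : ℕ) (hq : 2 ≤ q) (hc : 2 ≤ c) (G : SimpleGraph V) :
    (homCount (necklace c q) G : ℝ) = ∑ i, eig G q i ^ c := by
  rw [homCount_eq_trace_re q c hq hc G,
    show eig G q = (mre_isHermitian G q).eigenvalues from rfl,
    ← trace_pow_eq_sum_eigs (mre_isHermitian G q) c]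

end NeckSpec

namespace Cliques
open Matrix

variable {n : ℕ}

/-- Disjoint union of cliques with sizes `m i`. -/
def cliqueGraph (m : Fin n → ℕ) : SimpleGraph (Σ i : Fin n, Fin (m i)) where
  Adj a b := a.1 = b.1 ∧ a ≠ b
  symm := ⟨by rintro a b ⟨h1, h2⟩; exact ⟨h1.symm, h2.symm⟩⟩
  loopless := ⟨by rintro a ⟨h1, h2⟩; exact h2 rfl⟩

lemma sig_ext {m : Fin n → ℕ} {x y : Σ i : Fin n, Fin (m i)} :
    x = y ↔ x.1 = y.1 ∧ (x.2 : ℕ) = (y.2 : ℕ) := by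
  constructor
  · rintro rfl; exact ⟨rfl, rfl⟩
  · obtain ⟨xi, xv⟩ := x
    obtain ⟨yi, yv⟩ := y
    rintro ⟨h1, h2⟩
    dsimp only at h1 h2
    subst h1
    rw [show xv = yv from Fin.ext h2]

lemma mnat_not_adj {V : Type} [Fintype V] (G : SimpleGraph V) (q : ℕ) {a b : V}
    (h : ¬ G.Adj a b) : NeckAux3.Mnat G q a b = 0 := by
  haveI : IsEmpty {g : Fin (q - 2) → V // NeckAux3.ExtOK G q a b g} :=
    ⟨fun g => h g.2.1⟩
  exact Nat.card_of_isEmpty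

/-- The extension-counting equivalence for cliques. -/
def extEquiv (q : ℕ) (m : Fin n → ℕ) (i : Fin n) (u u' : Fin (m i)) (huu : u ≠ u') :
    {g : Fin (q - 2) → Σ i : Fin n, Fin (m i) //
        NeckAux3.ExtOK (cliqueGraph m) q ⟨i, u⟩ ⟨i, u'⟩ g} ≃
      (Fin (q - 2) ↪ {w : Fin (m i) // w ≠ u ∧ w ≠ u'}) where
  toFun gh :=
    ⟨fun s => ⟨⟨((gh.1 s).2 : ℕ), by
        exact lt_of_lt_of_le (gh.1 s).2.isLt (le_of_eq (congrArg m (gh.2.2.1 s).1).symm)⟩,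
      fun hEq => (gh.2.2.1 s).2 (sig_ext.mpr ⟨(gh.2.2.1 s).1, by
        simpa using (congrArg Fin.val hEq).symm⟩),
      fun hEq => (gh.2.2.2.1 s).2 (sig_ext.mpr ⟨(gh.2.2.2.1 s).1, by
        simpa using (congrArg Fin.val hEq).symm⟩)⟩,
      by
        intro s s' hss
        by_contra hne
        refine (gh.2.2.2.2 s s' hne).2
          (sig_ext.mpr ⟨(gh.2.2.1 s).1.symm.trans (gh.2.2.1 s').1, ?_⟩)
        simpa using congrArg Fin.val (congrArg Subtype.val hss)⟩
  invFun f := by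
    refine ⟨fun s => ⟨i, (f s).1⟩, ⟨rfl, fun h => huu (Fin.ext (sig_ext.mp h).2)⟩,
      fun s => ⟨rfl, fun h => (f s).2.1 (Fin.ext (sig_ext.mp h).2).symm⟩,
      fun s => ⟨rfl, fun h => (f s).2.2 (Fin.ext (sig_ext.mp h).2).symm⟩,
      fun s s' hss => ⟨rfl, fun h => hss (f.injective (Subtype.ext (Fin.ext (sig_ext.mp h).2)))⟩⟩
  left_inv gh := by
    obtain ⟨g, hg⟩ := gh
    apply Subtype.ext
    funext s
    exact sig_ext.mpr ⟨(hg.2.1 s).1, rfl⟩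
  right_inv f := by
    apply Function.Embedding.ext
    intro s
    exact Subtype.ext (Fin.ext rfl)

lemma card_two_compl {k : ℕ} {u u' : Fin k} (huu : u ≠ u') :
    Fintype.card {w : Fin k // w ≠ u ∧ w ≠ u'} = k - 2 := by
  rw [Fintype.card_subtype]
  have h : (Finset.univ.filter fun w : Fin k => w ≠ u ∧ w ≠ u') = ({u, u'} : Finset (Fin k))ᶜ := by
    ext w
    simp [not_or]
  rw [h, Finset.card_compl, Finset.card_pair huu, Fintype.card_fin]

lemma mnat_same_block (q : ℕ) (m : Fin n → ℕ) (i : Fin n) (u u' : Fin (m i)) (huu : u ≠ u') :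
    NeckAux3.Mnat (cliqueGraph m) q ⟨i, u⟩ ⟨i, u'⟩ = (m i - 2).descFactorial (q - 2) := by
  classical
  rw [NeckAux3.Mnat, Nat.card_congr (extEquiv q m i u u' huu), Nat.card_eq_fintype_card,
    Fintype.card_embedding_eq, card_two_compl huu, Fintype.card_fin]

/-- The all-ones matrix. -/
def J (k : ℕ) : Matrix (Fin k) (Fin k) ℝ := Matrix.of fun _ _ => 1

/-- The adjacency matrix of the complete graph. -/
def Em (k : ℕ) : Matrix (Fin k) (Fin k) ℝ := Matrix.of fun u v => if u = v then 0 else 1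

lemma Em_eq (k : ℕ) : Em k = J k - 1 := by
  ext u v
  by_cases h : u = v <;> simp [Em, J, Matrix.one_apply, h]

lemma trace_J (k : ℕ) : (J k).trace = (k : ℝ) := by
  simp [Matrix.trace, Matrix.diag, J]

lemma JJ (k : ℕ) : J k * J k = (k : ℝ) • J k := by
  ext u v
  simp [Matrix.mul_apply, J]

lemma trace_Em_pow (k c : ℕ) :
    ((Em k) ^ c).trace = ((k : ℝ) - 1) ^ c + ((k : ℝ) - 1) * (-1) ^ c := by
  have key : ∀ c : ℕ, ∃ a : ℝ, (J k - 1) ^ c = a • J k + ((-1 : ℝ)) ^ c • 1 ∧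
      (k : ℝ) * a = ((k : ℝ) - 1) ^ c - (-1) ^ c := by
    intro c
    induction c with
    | zero => exact ⟨0, by simp, by simp⟩
    | succ c ih =>
      obtain ⟨a, h1, h2⟩ := ih
      refine ⟨a * ((k : ℝ) - 1) + (-1) ^ c, ?_, by linear_combination ((k : ℝ) - 1) * h2⟩
      rw [pow_succ, h1, mul_sub, mul_one, add_mul, smul_mul_assoc, smul_mul_assoc, one_mul,
        JJ, smul_smul]
      module
  obtain ⟨a, h1, h2⟩ := key c
  rw [Em_eq, h1, Matrix.trace_add, Matrix.trace_smul, Matrix.trace_smul, trace_J,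
    Matrix.trace_one, Fintype.card_fin]
  simp only [smul_eq_mul]
  linear_combination h2

lemma mre_clique_eq (q : ℕ) (m : Fin n → ℕ) :
    NeckSpec.Mre (cliqueGraph m) q =
      Matrix.blockDiagonal' (fun i => ((m i - 2).descFactorial (q - 2) : ℝ) • Em (m i)) := by
  ext a b
  obtain ⟨i, u⟩ := a
  obtain ⟨j, v⟩ := b
  by_cases hij : i = j
  · subst hij
    rw [Matrix.blockDiagonal'_apply_eq]
    by_cases huv : u = v
    · subst huv
      have : ¬ (cliqueGraph m).Adj ⟨i, u⟩ ⟨i, u⟩ := (cliqueGraph m).loopless.irrefl _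
      simp [NeckSpec.Mre, Matrix.map_apply, mnat_not_adj _ _ this, Em, Matrix.smul_apply]
    · rw [show (NeckSpec.Mre (cliqueGraph m) q) ⟨i, u⟩ ⟨i, v⟩
          = ((NeckAux3.Mnat (cliqueGraph m) q) ⟨i, u⟩ ⟨i, v⟩ : ℝ) from rfl,
        mnat_same_block q m i u v huv]
      simp [Em, Matrix.smul_apply, huv]
  · rw [Matrix.blockDiagonal'_apply_ne _ _ _ hij]
    have : ¬ (cliqueGraph m).Adj ⟨i, u⟩ ⟨j, v⟩ := fun h => hij h.1
    simp [NeckSpec.Mre, Matrix.map_apply, mnat_not_adj _ _ this]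

theorem homCount_cliques (q c : ℕ) (hq : 2 ≤ q) (hc : 2 ≤ c) (hce : Even c)
    (m : Fin n → ℕ) :
    (homCount (necklace c q) (cliqueGraph m) : ℝ)
      = ∑ i, ((m i - 2).descFactorial (q - 2) : ℝ) ^ c *
          ((((m i : ℝ) - 1)) ^ c + ((m i : ℝ) - 1)) := by
  classical
  rw [NeckSpec.homCount_eq_trace_re q c hq hc, mre_clique_eq q m, ← Matrix.blockDiagonal'_pow,
    Matrix.trace_blockDiagonal']
  apply Finset.sum_congr rfl
  intro i _
  rw [Pi.pow_apply, smul_pow, Matrix.trace_smul, trace_Em_pow, smul_eq_mul, hce.neg_one_pow,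
    mul_one]

end Cliques

namespace Lim
open Filter

lemma natpos (N : ℕ) (hN : 1 ≤ N) : (0:ℝ) < N := by exact_mod_cast Nat.pos_of_ne_zero (by omega)

lemma tendsto_ceil_div {z : ℝ} (hz : 0 ≤ z) :
    Tendsto (fun N : ℕ => (⌈z * N⌉₊ : ℝ) / N) atTop (nhds z) := by
  have h1 : Tendsto (fun N : ℕ => z + 1 / (N : ℝ)) atTop (nhds z) := by
    have h0 := tendsto_const_div_atTop_nhds_zero_nat (1 : ℝ)
    simpa using tendsto_const_nhds.add h0
  apply tendsto_of_tendsto_of_tendsto_of_le_of_le' tendsto_const_nhds h1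
  · filter_upwards [eventually_ge_atTop 1] with N hN
    have hN0 : (0:ℝ) < N := natpos N hN
    rw [le_div_iff₀ hN0]
    exact Nat.le_ceil _
  · filter_upwards [eventually_ge_atTop 1] with N hN
    have hN0 : (0:ℝ) < N := natpos N hN
    have h2 : (⌈z * N⌉₊ : ℝ) ≤ z * N + 1 := (Nat.ceil_lt_add_one (by positivity)).le
    rw [div_le_iff₀ hN0, add_mul, one_div, inv_mul_cancel₀ hN0.ne']
    exact h2

lemma div_div_div_pow (A B d : ℝ) (hd : d ≠ 0) (p : ℕ) (hp : p ≠ 0) :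
    (A / d ^ p) / ((B / d) ^ p) = A / B ^ p := by
  rcases eq_or_ne B 0 with rfl | hB
  · simp [zero_pow hp]
  · rw [div_pow]
    field_simp

end Lim

namespace Lim
open Filter Finset

/-- The block sizes. -/
noncomputable def mfun (q : ℕ) (z : ℝ) (N : ℕ) : ℕ := q + ⌈z * N⌉₊

lemma mfun_ge (q : ℕ) (z : ℝ) (N : ℕ) : q ≤ mfun q z N := Nat.le_add_right _ _

lemma desc_pos (q : ℕ) (hq : 2 ≤ q) (m : ℕ) (hm : q ≤ m) :
    1 ≤ (m - 2).descFactorial (q - 2) := by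
  calc 1 = 1 ^ (q - 2) := (one_pow _).symm
    _ ≤ (m - 2 + 1 - (q - 2)) ^ (q - 2) := Nat.pow_le_pow_left (by omega) _
    _ ≤ (m - 2).descFactorial (q - 2) := Nat.pow_sub_le_descFactorial _ _

lemma tendsto_m_div (q : ℕ) {z : ℝ} (hz : 0 ≤ z) :
    Tendsto (fun N : ℕ => (mfun q z N : ℝ) / N) atTop (nhds z) := by
  have h1 : ∀ N : ℕ, (mfun q z N : ℝ) / N = (q : ℝ) / N + (⌈z * N⌉₊ : ℝ) / N := by
    intro N
    rw [mfun]
    push_cast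
    rw [add_div]
  simp only [h1]
  have := (tendsto_const_div_atTop_nhds_zero_nat (q : ℝ)).add (tendsto_ceil_div hz)
  simpa using this

lemma prod_rep (q : ℕ) (hq : 2 ≤ q) (m : ℕ) (hm : q ≤ m) :
    ((m - 2).descFactorial (q - 2) : ℝ) * ((m : ℝ) - 1)
      = ∏ r ∈ range (q - 1), ((m - 1 - r : ℕ) : ℝ) := by
  have hnat : (m - 1) * (m - 2).descFactorial (q - 2) = ∏ r ∈ range (q - 1), (m - 1 - r) := by
    have hq1 : q - 1 = (q - 2) + 1 := by omega
    rw [hq1, Finset.prod_range_succ', Nat.descFactorial_eq_prod_range, Nat.sub_zero, mul_comm]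
    congr 1
    apply Finset.prod_congr rfl
    intro r _
    omega
  have h1 : ((m : ℝ) - 1) = ((m - 1 : ℕ) : ℝ) := by
    have : 1 ≤ m := by omega
    push_cast [this]
    ring
  rw [h1, mul_comm, ← Nat.cast_mul, hnat]
  push_cast
  rfl

lemma tendsto_factor (q : ℕ) (hq : 2 ≤ q) {z : ℝ} (hz : 0 ≤ z) (r : ℕ) (hr : r < q - 1) :
    Tendsto (fun N : ℕ => ((mfun q z N - 1 - r : ℕ) : ℝ) / N) atTop (nhds z) := by
  have hsplit : ∀ N : ℕ, (mfun q z N - 1 - r) = (q - 1 - r) + ⌈z * N⌉₊ := by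
    intro N
    rw [mfun]
    set C := ⌈z * (N:ℝ)⌉₊
    omega
  simp only [hsplit]
  push_cast
  simp only [add_div]
  have := (tendsto_const_div_atTop_nhds_zero_nat ((q - 1 - r : ℕ) : ℝ)).add (tendsto_ceil_div hz)
  simpa using this

lemma tendsto_a_div (q : ℕ) (hq : 2 ≤ q) {z : ℝ} (hz : 0 ≤ z) :
    Tendsto (fun N : ℕ =>
        (((mfun q z N - 2).descFactorial (q - 2) : ℝ) * ((mfun q z N : ℝ) - 1)) / (N : ℝ) ^ (q - 1))
      atTop (nhds (z ^ (q - 1))) := by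
  have key : ∀ N : ℕ,
      (((mfun q z N - 2).descFactorial (q - 2) : ℝ) * ((mfun q z N : ℝ) - 1)) / (N : ℝ) ^ (q - 1)
        = ∏ r ∈ range (q - 1), (((mfun q z N - 1 - r : ℕ) : ℝ) / N) := by
    intro N
    rw [prod_rep q hq _ (mfun_ge q z N), Finset.prod_div_distrib, Finset.prod_const,
      Finset.card_range]
  simp only [key]
  have hlim : z ^ (q - 1) = ∏ _r ∈ range (q - 1), z := by
    rw [Finset.prod_const, Finset.card_range]
  rw [hlim]
  exact tendsto_finset_prod _ fun r hr => tendsto_factor q hq hz r (Finset.mem_range.mp hr)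

lemma tendsto_err (q c : ℕ) (hq : 2 ≤ q) (hc : 2 ≤ c) {z : ℝ} (hz : 0 ≤ z) :
    Tendsto (fun N : ℕ =>
        (((mfun q z N - 2).descFactorial (q - 2) : ℝ) ^ c * ((mfun q z N : ℝ) - 1))
          / (N : ℝ) ^ (c * (q - 1)))
      atTop (nhds 0) := by
  set K := c * (q - 2) + 1 with hK
  have hexp : c * (q - 1) = K + (c - 1) := by
    have h1 : c * (q - 1) = c * (q - 2) + c := by
      rw [show q - 1 = (q - 2) + 1 by omega, Nat.mul_add, Nat.mul_one]
    generalize c * (q - 2) = e at *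
    omega
  have hnum : ∀ N : ℕ, ((mfun q z N - 2).descFactorial (q - 2)) ^ c * (mfun q z N - 1)
      ≤ (mfun q z N) ^ K := by
    intro N
    calc ((mfun q z N - 2).descFactorial (q - 2)) ^ c * (mfun q z N - 1)
        ≤ ((mfun q z N) ^ (q - 2)) ^ c * (mfun q z N) :=
          Nat.mul_le_mul (Nat.pow_le_pow_left ((Nat.descFactorial_le_pow _ _).trans
            (Nat.pow_le_pow_left (Nat.sub_le _ _) _)) c) (Nat.sub_le _ _)
      _ = (mfun q z N) ^ K := by rw [← pow_mul, ← pow_succ, hK, Nat.mul_comm c]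
  have hub : Tendsto (fun N : ℕ => ((mfun q z N : ℝ) / N) ^ K * (1 / (N : ℝ)) ^ (c - 1))
      atTop (nhds 0) := by
    have h1 := (tendsto_m_div q hz).pow K
    have h2 : Tendsto (fun N : ℕ => (1 / (N : ℝ)) ^ (c - 1)) atTop (nhds 0) := by
      have := (tendsto_const_div_atTop_nhds_zero_nat (1 : ℝ)).pow (c - 1)
      simpa [zero_pow (show c - 1 ≠ 0 by omega)] using this
    simpa using h1.mul h2
  apply tendsto_of_tendsto_of_tendsto_of_le_of_le' tendsto_const_nhds hub
  · filter_upwards [eventually_ge_atTop 1] with N hN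
    have hm1 : (1 : ℝ) ≤ (mfun q z N : ℝ) - 1 := by
      have := mfun_ge q z N
      have h2 : (2 : ℝ) ≤ (mfun q z N : ℝ) := by exact_mod_cast by omega
      linarith
    have hN0 : (0 : ℝ) < N := natpos N hN
    positivity
  · filter_upwards [eventually_ge_atTop 1] with N hN
    have hN0 : (0 : ℝ) < N := natpos N hN
    have hu : ((mfun q z N : ℝ) / N) ^ K * (1 / (N : ℝ)) ^ (c - 1)
        = ((mfun q z N : ℝ)) ^ K / (N : ℝ) ^ (c * (q - 1)) := by
      rw [div_pow, div_pow, one_pow, div_mul_div_comm, mul_one, ← pow_add, ← hexp]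
    rw [hu]
    rw [div_le_div_iff_of_pos_right (by positivity : (0:ℝ) < (N : ℝ) ^ (c * (q - 1)))]
    have hm1 : ((mfun q z N : ℝ) - 1) = ((mfun q z N - 1 : ℕ) : ℝ) := by
      have h2 : 1 ≤ mfun q z N := by have := mfun_ge q z N; omega
      push_cast [h2]
      ring
    rw [hm1]
    exact_mod_cast hnum N

lemma tendsto_F (q c : ℕ) (hq : 2 ≤ q) (hc : 2 ≤ c) (hce : Even c) {n : ℕ}
    (z : Fin n → ℝ) (hz0 : ∀ i, 0 ≤ z i) :
    Tendsto (fun N : ℕ =>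
        (homCount (necklace c q) (Cliques.cliqueGraph (fun i => mfun q (z i) N)) : ℝ)
          / (N : ℝ) ^ (c * (q - 1)))
      atTop (nhds (∑ i, (z i) ^ ((q - 1) * c))) := by
  have key : ∀ N : ℕ,
      (homCount (necklace c q) (Cliques.cliqueGraph (fun i => mfun q (z i) N)) : ℝ)
          / (N : ℝ) ^ (c * (q - 1))
        = (∑ i, ((((mfun q (z i) N - 2).descFactorial (q - 2) : ℝ)
              * ((mfun q (z i) N : ℝ) - 1)) / (N : ℝ) ^ (q - 1)) ^ c)
          + ∑ i, (((mfun q (z i) N - 2).descFactorial (q - 2) : ℝ) ^ c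
              * ((mfun q (z i) N : ℝ) - 1)) / (N : ℝ) ^ (c * (q - 1)) := by
    intro N
    rw [Cliques.homCount_cliques q c hq hc hce, Finset.sum_div, ← Finset.sum_add_distrib]
    apply Finset.sum_congr rfl
    intro i _
    rw [div_pow, mul_pow, ← pow_mul, mul_add, add_div, mul_comm (q - 1) c]
  simp only [key]
  have h1 : Tendsto (fun N : ℕ => ∑ i, ((((mfun q (z i) N - 2).descFactorial (q - 2) : ℝ)
      * ((mfun q (z i) N : ℝ) - 1)) / (N : ℝ) ^ (q - 1)) ^ c) atTop
      (nhds (∑ i, (z i) ^ ((q - 1) * c))) := by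
    apply tendsto_finset_sum
    intro i _
    have := (tendsto_a_div q hq (hz0 i)).pow c
    rwa [← pow_mul] at this
  have h2 : Tendsto (fun N : ℕ => ∑ i, (((mfun q (z i) N - 2).descFactorial (q - 2) : ℝ) ^ c
      * ((mfun q (z i) N : ℝ) - 1)) / (N : ℝ) ^ (c * (q - 1))) atTop (nhds 0) := by
    have := tendsto_finset_sum (Finset.univ : Finset (Fin n))
      (fun i _ => tendsto_err q c hq hc (hz0 i))
    simpa using this
  simpa using h1.add h2

lemma homCount_cliques_ne_zero (q c : ℕ) (hq : 2 ≤ q) (hc : 2 ≤ c) (hce : Even c)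
    {n : ℕ} (hn : n ≠ 0) (z : Fin n → ℝ) (N : ℕ) :
    homCount (necklace c q) (Cliques.cliqueGraph (fun i => mfun q (z i) N)) ≠ 0 := by
  haveI : Nonempty (Fin n) := ⟨⟨0, Nat.pos_of_ne_zero hn⟩⟩
  intro h0
  have h := Cliques.homCount_cliques q c hq hc hce (fun i => mfun q (z i) N)
  rw [h0] at h
  have hpos : 0 < ∑ i, ((mfun q (z i) N - 2).descFactorial (q - 2) : ℝ) ^ c *
      (((mfun q (z i) N : ℝ) - 1) ^ c + ((mfun q (z i) N : ℝ) - 1)) := by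
    apply Finset.sum_pos _ Finset.univ_nonempty
    intro i _
    have hd : (1 : ℝ) ≤ ((mfun q (z i) N - 2).descFactorial (q - 2) : ℝ) := by
      exact_mod_cast desc_pos q hq _ (mfun_ge q (z i) N)
    have hm : (1 : ℝ) ≤ (mfun q (z i) N : ℝ) - 1 := by
      have h2 : (2 : ℝ) ≤ (mfun q (z i) N : ℝ) := by
        have := mfun_ge q (z i) N
        exact_mod_cast by omega
      linarith
    have h3 : (0:ℝ) < ((mfun q (z i) N : ℝ) - 1) ^ c + ((mfun q (z i) N : ℝ) - 1) := by
      positivity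
    positivity
  rw [← h] at hpos
  simp at hpos

end Lim


end Aux

/-- The necklace ratio profile for fixed `q` equals the power-sum profile: for `q ≥ 2` and
`ℓ ≥ 2`, the closure of the points
`(hom(N_{8,q};G)/hom(N_{4,q};G)^2, …, hom(N_{4ℓ,q};G)/hom(N_{4,q};G)^ℓ)` over all finite
simple graphs `G` with `hom(N_{4,q};G) ≠ 0` equals `Π_ℓ`. -/
theorem necklace_ratio_profile_eq_powerSumProfile (q ℓ : ℕ) (hq : 2 ≤ q) (hℓ : 2 ≤ ℓ) :
    closure {v : Fin (ℓ - 1) → ℝ | ∃ (V : Type) (_ : Fintype V) (G : SimpleGraph V),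
        homCount (necklace 4 q) G ≠ 0 ∧
        ∀ j : Fin (ℓ - 1), v j =
          (homCount (necklace (4 * ((j : ℕ) + 2)) q) G : ℝ) /
            (homCount (necklace 4 q) G : ℝ) ^ ((j : ℕ) + 2)} = powerSumProfile ℓ := by

  apply Set.Subset.antisymm
  · apply closure_minimal _ isClosed_closure
    intro v hv
    apply subset_closure
    obtain ⟨V, hVf, G, hne, hvj⟩ := hv
    classical
    set T : ℝ := ∑ i, NeckSpec.eig G q i ^ 4 with hTdef
    have hT4 : (homCount (necklace 4 q) G : ℝ) = T :=
      NeckSpec.homCount_eq_sum_eig q 4 hq (by norm_num) G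
    have hT0 : 0 ≤ T := Finset.sum_nonneg fun i _ => by positivity
    have hTne : T ≠ 0 := by
      rw [← hT4]
      exact_mod_cast hne
    set n := Fintype.card V with hn
    set e : V ≃ Fin n := Fintype.equivFin V with he
    refine ⟨n, fun i => NeckSpec.eig G q (e.symm i) ^ 4 / T, fun i => by positivity, ?_, ?_⟩
    · rw [← Finset.sum_div, Equiv.sum_comp e.symm (fun w => NeckSpec.eig G q w ^ 4), div_self hTne]
    · intro j
      rw [hvj j, NeckSpec.homCount_eq_sum_eig q (4 * ((j : ℕ) + 2)) hq (by omega) G, hT4]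
      rw [Finset.sum_div]
      rw [← Equiv.sum_comp e.symm
        (fun w => NeckSpec.eig G q w ^ (4 * ((j : ℕ) + 2)) / T ^ ((j : ℕ) + 2))]
      apply Finset.sum_congr rfl
      intro i _
      rw [div_pow, ← pow_mul]
  · rw [powerSumProfile]
    apply closure_minimal _ isClosed_closure
    intro v hv
    obtain ⟨n, x, hx0, hx1, hvj⟩ := hv
    have hn : n ≠ 0 := by
      rintro rfl
      simpa using hx1
    haveI : Nonempty (Fin n) := ⟨⟨0, Nat.pos_of_ne_zero hn⟩⟩
    classical
    set z : Fin n → ℝ := fun i => x i ^ (((4 * (q - 1) : ℕ) : ℝ))⁻¹ with hzdef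
    have hz0 : ∀ i, 0 ≤ z i := fun i => Real.rpow_nonneg (hx0 i) _
    have hzx : ∀ i, z i ^ (4 * (q - 1)) = x i := by
      intro i
      simp only [hzdef]
      rw [← Real.rpow_natCast (x i ^ (((4 * (q - 1) : ℕ) : ℝ))⁻¹) (4 * (q - 1)),
        ← Real.rpow_mul (hx0 i), inv_mul_cancel₀ (Nat.cast_ne_zero.mpr (by omega)),
        Real.rpow_one]
    have hF4 := Lim.tendsto_F q 4 hq (by norm_num) (by decide) z hz0
    have e4 : ∑ i, z i ^ ((q - 1) * 4) = 1 := by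
      rw [← hx1]
      apply Finset.sum_congr rfl
      intro i _
      rw [← hzx i]
      congr 1
      ring
    rw [e4] at hF4
    set vseq : ℕ → Fin (ℓ - 1) → ℝ := fun N j =>
      (homCount (necklace (4 * ((j : ℕ) + 2)) q)
          (Cliques.cliqueGraph (fun i => Lim.mfun q (z i) N)) : ℝ) /
        (homCount (necklace 4 q) (Cliques.cliqueGraph (fun i => Lim.mfun q (z i) N)) : ℝ)
          ^ ((j : ℕ) + 2) with hvseq
    apply mem_closure_of_tendsto (f := vseq) (b := (Filter.atTop : Filter ℕ)) ?_ (Filter.Eventually.of_forall fun N => ?_)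
    · rw [tendsto_pi_nhds]
      intro j
      have hcj2 : 2 ≤ 4 * ((j : ℕ) + 2) := by omega
      have hcje : Even (4 * ((j : ℕ) + 2)) := ⟨2 * ((j : ℕ) + 2), by ring⟩
      have hFj := Lim.tendsto_F q (4 * ((j : ℕ) + 2)) hq hcj2 hcje z hz0
      have ej : ∑ i, z i ^ ((q - 1) * (4 * ((j : ℕ) + 2))) = ∑ i, x i ^ ((j : ℕ) + 2) := by
        apply Finset.sum_congr rfl
        intro i _
        rw [← hzx i, ← pow_mul]
        congr 1
        ring
      rw [ej] at hFj
      have hdiv := hFj.div (hF4.pow ((j : ℕ) + 2)) (by norm_num)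
      rw [one_pow, div_one] at hdiv
      rw [hvj j]
      apply Filter.Tendsto.congr' ?_ hdiv
      filter_upwards [Filter.eventually_ge_atTop 1] with N hN
      have hdne : ((N : ℝ)) ^ (4 * (q - 1)) ≠ 0 := by
        have := Lim.natpos N hN
        positivity
      have key := Lim.div_div_div_pow
        ((homCount (necklace (4 * ((j : ℕ) + 2)) q)
            (Cliques.cliqueGraph (fun i => Lim.mfun q (z i) N)) : ℝ))
        ((homCount (necklace 4 q) (Cliques.cliqueGraph (fun i => Lim.mfun q (z i) N)) : ℝ))
        ((N : ℝ) ^ (4 * (q - 1))) hdne ((j : ℕ) + 2) (by omega)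
      have hexp2 : (((N : ℝ) ^ (4 * (q - 1))) ^ ((j : ℕ) + 2))
          = (N : ℝ) ^ ((4 * ((j : ℕ) + 2)) * (q - 1)) := by
        rw [← pow_mul]
        congr 1
        ring
      rw [hexp2] at key
      exact key
    · exact ⟨Σ i : Fin n, Fin (Lim.mfun q (z i) N), inferInstance,
        Cliques.cliqueGraph (fun i => Lim.mfun q (z i) N),
        Lim.homCount_cliques_ne_zero q 4 hq (by norm_num) (by decide) hn z N,
        fun j => rfl⟩
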